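/- Let Z = xA ∂/∂x + yB ∂/∂y be a holomorphic vector field on a neighborhood of the closed polydisc {|x| ≤ a, |y| ≤ b} in ℂ², with Re(A) > 0 > Re(B). Let (p_n) be a sequence of points p_n = (x_n, y_n) with x_n y_n ≠ 0 and p_n → 0. For each n let q_n be the (unique) point where the forward real trajectory through p_n meets {|x| = a}. Then every limit point of the sequence (q_n) lies on the circle {|x| = a, y = 0}, i.e., q_n accumulates only on the separatrix {y = 0}. -/

import Mathlib

open Filter

-- auxiliary: norm of y nonincreasing
theorem aux_decay {T : ℝ} (hT : 0 ≤ T) {y : ℝ → ℂ} {c : ℝ → ℂ}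
    (hyd : ∀ t ∈ Set.Icc 0 T, HasDerivWithinAt y (y t * c t) (Set.Icc 0 T) t)
    (hc : ∀ t ∈ Set.Icc 0 T, (c t).re < 0) :
    ‖y T‖ ≤ ‖y 0‖ := by
  set g : ℝ → ℝ := fun t => ((y t) * (starRingEnd ℂ) (y t)).re with hg
  have hint : interior (Set.Icc (0:ℝ) T) = Set.Ioo 0 T := interior_Icc
  have hganti : AntitoneOn g (Set.Icc 0 T) := by
    apply antitoneOn_of_hasDerivWithinAt_nonpos (convex_Icc 0 T)
      (f' := fun t => ((y t * c t) * (starRingEnd ℂ) (y t)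
        + y t * (starRingEnd ℂ) (y t * c t)).re)
    · intro t ht
      have hy := (hyd t ht).continuousWithinAt
      exact Complex.continuous_re.continuousAt.comp_continuousWithinAt (hy.mul hy.star)
    · intro t ht
      have ht' : t ∈ Set.Icc 0 T := interior_subset ht
      have hy := (hyd t ht').mono (interior_subset)
      have hys : HasDerivWithinAt (fun s => (starRingEnd ℂ) (y s))
          ((starRingEnd ℂ) (y t * c t)) (interior (Set.Icc 0 T)) t := hy.star
      have hmul := hy.mul hys
      exact (Complex.reCLM.hasFDerivAt.comp_hasDerivWithinAt t hmul)
    · intro t ht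
      have ht' : t ∈ Set.Icc 0 T := interior_subset ht
      have key : (y t * c t) * (starRingEnd ℂ) (y t)
          + y t * (starRingEnd ℂ) (y t * c t)
          = (Complex.normSq (y t) : ℂ) * (c t + (starRingEnd ℂ) (c t)) := by
        rw [map_mul, ← Complex.mul_conj]
        ring
      rw [key]
      have : (c t + (starRingEnd ℂ) (c t)) = ((2 * (c t).re : ℝ) : ℂ) := by
        rw [Complex.add_conj]
      rw [this, ← Complex.ofReal_mul, Complex.ofReal_re]
      have h1 : (c t).re < 0 := hc t ht'
      nlinarith [Complex.normSq_nonneg (y t)]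
  have hle : g T ≤ g 0 := hganti (Set.left_mem_Icc.2 hT) (Set.right_mem_Icc.2 hT) hT
  have hgeq : ∀ t, g t = Complex.normSq (y t) := by
    intro t; simp [hg, Complex.mul_conj]
  rw [hgeq, hgeq] at hle
  rw [Complex.norm_def, Complex.norm_def]
  exact Real.sqrt_le_sqrt hle

theorem stmt_9 (a b : ℝ) (ha : 0 < a) (hb : 0 < b)
    (U : Set (ℂ × ℂ)) (hU : IsOpen U)
    (hsub : {p : ℂ × ℂ | ‖p.1‖ ≤ a ∧ ‖p.2‖ ≤ b} ⊆ U)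
    (A B : ℂ × ℂ → ℂ) (hA : DifferentiableOn ℂ A U) (hB : DifferentiableOn ℂ B U)
    (hReA : ∀ p ∈ U, 0 < (A p).re) (hReB : ∀ p ∈ U, (B p).re < 0)
    (p : ℕ → ℂ × ℂ)
    (hp0 : ∀ n, (p n).1 ≠ 0 ∧ (p n).2 ≠ 0)
    (hpin : ∀ n, ‖(p n).1‖ ≤ a ∧ ‖(p n).2‖ ≤ b)
    (hplim : Filter.Tendsto p Filter.atTop (nhds 0))
    (q : ℕ → ℂ × ℂ)
    (hq : ∀ n, ‖(q n).1‖ = a ∧ ‖(q n).2‖ ≤ b ∧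
      ∃ T : ℝ, 0 ≤ T ∧ ∃ x y : ℝ → ℂ,
        x 0 = (p n).1 ∧ y 0 = (p n).2 ∧
        (∀ t ∈ Set.Icc 0 T, ‖x t‖ ≤ a ∧ ‖y t‖ ≤ b) ∧
        (∀ t ∈ Set.Icc 0 T,
          HasDerivWithinAt x (x t * A (x t, y t)) (Set.Icc 0 T) t) ∧
        (∀ t ∈ Set.Icc 0 T,
          HasDerivWithinAt y (y t * B (x t, y t)) (Set.Icc 0 T) t) ∧
        (x T, y T) = q n)
    (L : ℂ × ℂ) (hL : MapClusterPt L Filter.atTop q) :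
    ‖L.1‖ = a ∧ L.2 = 0 := by
  -- key decay estimate
  have hdec : ∀ n, ‖(q n).2‖ ≤ ‖(p n).2‖ := by
    intro n
    obtain ⟨_, _, T, hT, x, y, hx0, hy0, hbound, hxd, hyd, hend⟩ := hq n
    have hcn : ∀ t ∈ Set.Icc 0 T, (B (x t, y t)).re < 0 := fun t ht =>
      hReB _ (hsub ⟨(hbound t ht).1, (hbound t ht).2⟩)
    have := aux_decay hT hyd hcn
    rw [hy0] at this
    have h2 : (q n).2 = y T := by rw [← hend]
    rw [h2]; exact this
  obtain ⟨ψ, hψ, hlim⟩ := TopologicalSpace.FirstCountableTopology.tendsto_subseq hL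
  constructor
  · have h1 : Filter.Tendsto (fun k => ‖((q ∘ ψ) k).1‖) Filter.atTop
        (nhds (‖L.1‖)) :=
      (continuous_norm.continuousAt.tendsto.comp
        ((continuous_fst.continuousAt.tendsto).comp hlim))
    have h2 : (fun k => ‖((q ∘ ψ) k).1‖) = fun _ => a := by
      funext k; exact (hq (ψ k)).1
    rw [h2] at h1
    exact tendsto_nhds_unique h1 tendsto_const_nhds
  · have h1 : Filter.Tendsto (fun k => ‖((q ∘ ψ) k).2‖) Filter.atTop
        (nhds (‖L.2‖)) :=
      (continuous_norm.continuousAt.tendsto.comp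
        ((continuous_snd.continuousAt.tendsto).comp hlim))
    have hp2 : Filter.Tendsto (fun k => ‖(p (ψ k)).2‖) Filter.atTop (nhds 0) := by
      have : Filter.Tendsto (fun n => ‖(p n).2‖) Filter.atTop (nhds 0) := by
        have := (continuous_norm.continuousAt.tendsto.comp
          ((continuous_snd.continuousAt.tendsto).comp hplim))
        simpa [Function.comp_def] using this
      exact this.comp hψ.tendsto_atTop
    have h0 : Filter.Tendsto (fun k => ‖((q ∘ ψ) k).2‖) Filter.atTop (nhds 0) := by
      apply squeeze_zero (fun k => norm_nonneg _) (fun k => hdec (ψ k)) hp2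
    have := tendsto_nhds_unique h1 h0
    exact norm_eq_zero.mp this
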